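/- Let σ > 0, let Φ, φ be the standard normal CDF and PDF, let G be a C¹ CDF on [0, d̄] with d̄ ≥ 1 and G(2B(s)−1) < 1 where B(s) = 1/(1+e^{−2sσ}). Define H(s) = (Φ(s+σ) − Φ(s−σ))/(1 − G(2B(s)−1)). Then H'(0) > 0; in particular there exists C(σ) > 0 such that H is strictly increasing on [0, C(σ)]. -/

import Mathlib

noncomputable def phi (x : ℝ) : ℝ := (Real.sqrt (2 * Real.pi))⁻¹ * Real.exp (-x^2/2)

noncomputable def PhiCdf (x : ℝ) : ℝ := ∫ t in Set.Iic x, phi t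

lemma phi_cont : Continuous phi := by
  unfold phi; fun_prop

lemma phi_pos (x : ℝ) : 0 < phi x := by
  unfold phi
  have : 0 < Real.sqrt (2 * Real.pi) := Real.sqrt_pos.mpr (by positivity)
  positivity

lemma phi_integrable : MeasureTheory.Integrable phi := by
  have h : phi = fun x => (Real.sqrt (2 * Real.pi))⁻¹ * Real.exp (-(1/2 : ℝ) * x ^ 2) := by
    funext x; unfold phi; ring_nf
  rw [h]
  exact (integrable_exp_neg_mul_sq (by norm_num)).const_mul _

lemma hasDerivAt_PhiCdf (x : ℝ) : HasDerivAt PhiCdf (phi x) x := by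
  have key : PhiCdf = fun y => PhiCdf 0 + ∫ t in (0:ℝ)..y, phi t := by
    funext y
    have := intervalIntegral.integral_Iic_sub_Iic (μ := MeasureTheory.volume)
      (f := phi) (a := 0) (b := y) phi_integrable.integrableOn phi_integrable.integrableOn
    unfold PhiCdf
    linarith
  rw [key]
  exact (intervalIntegral.integral_hasDerivAt_right
    (phi_integrable.intervalIntegrable)
    phi_cont.aestronglyMeasurable.stronglyMeasurableAtFilter
    phi_cont.continuousAt).const_add _

theorem stmt_18 (σ : ℝ) (hσ : 0 < σ) (dbar : ℝ) (hd : 1 ≤ dbar)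
    (G : ℝ → ℝ) (hGC : ContDiff ℝ 1 G) (hGmono : Monotone G)
    (hGmaps : Set.MapsTo G (Set.Icc 0 dbar) (Set.Icc 0 1))
    (B : ℝ → ℝ) (hB : ∀ s, B s = 1 / (1 + Real.exp (-2 * s * σ)))
    (hGlt : ∀ s, G (2 * B s - 1) < 1)
    (hG' : 0 < deriv G 0)
    (H : ℝ → ℝ)
    (hH : ∀ s, H s = (PhiCdf (s + σ) - PhiCdf (s - σ)) / (1 - G (2 * B s - 1))) :
    0 < deriv H 0 ∧ ∃ C > 0, StrictMonoOn H (Set.Icc 0 C) := by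
  -- notation
  set f : ℝ → ℝ := fun s => 1 + Real.exp (-2 * s * σ) with hfdef
  have hfpos : ∀ s, 0 < f s := fun s => by positivity
  set Bd : ℝ → ℝ := fun s => 2 * σ * Real.exp (-2 * s * σ) / (f s) ^ 2 with hBddef
  set g : ℝ → ℝ := fun s => 2 * B s - 1 with hgdef
  set N : ℝ → ℝ := fun s => PhiCdf (s + σ) - PhiCdf (s - σ) with hNdef
  set Nd : ℝ → ℝ := fun s => phi (s + σ) - phi (s - σ) with hNddef
  set D : ℝ → ℝ := fun s => 1 - G (g s) with hDdef
  set Dd : ℝ → ℝ := fun s => -(deriv G (g s) * (2 * Bd s)) with hDddef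
  set Hd : ℝ → ℝ := fun s => (Nd s * D s - N s * Dd s) / (D s) ^ 2 with hHddef
  have hBfun : B = fun s => (f s)⁻¹ := by
    funext s; rw [hB]; simp [hfdef, one_div]
  have hDpos : ∀ s, 0 < D s := fun s => by
    have := hGlt s; simp only [hDdef, hgdef]; linarith
  have hDne : ∀ s, D s ≠ 0 := fun s => ne_of_gt (hDpos s)
  -- derivative of B
  have hBderiv : ∀ s, HasDerivAt B (Bd s) s := by
    intro s
    have h1 : HasDerivAt (fun s : ℝ => -2 * s * σ) (-2 * σ) s := by
      simpa using ((hasDerivAt_id s).const_mul (-2)).mul_const σ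
    have h2 := h1.exp
    have h3 : HasDerivAt f (Real.exp (-2 * s * σ) * (-2 * σ)) s := h2.const_add 1
    have h4 := h3.inv (ne_of_gt (hfpos s))
    rw [hBfun]
    refine h4.congr_deriv ?_
    show _ = 2 * σ * Real.exp (-2 * s * σ) / (f s) ^ 2
    ring
  -- derivative of N
  have hNderiv : ∀ s, HasDerivAt N (Nd s) s := by
    intro s
    have h1 : HasDerivAt (fun s : ℝ => PhiCdf (s + σ)) (phi (s + σ)) s := by
      simpa [Function.comp_def] using (hasDerivAt_PhiCdf (s + σ)).comp s ((hasDerivAt_id s).add_const σ)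
    have h2 : HasDerivAt (fun s : ℝ => PhiCdf (s - σ)) (phi (s - σ)) s := by
      simpa [Function.comp_def] using (hasDerivAt_PhiCdf (s - σ)).comp s ((hasDerivAt_id s).sub_const σ)
    exact h1.sub h2
  -- derivative of D
  have hGdiff : Differentiable ℝ G := hGC.differentiable one_ne_zero
  have hDderiv : ∀ s, HasDerivAt D (Dd s) s := by
    intro s
    have hg : HasDerivAt g (2 * Bd s) s := ((hBderiv s).const_mul 2).sub_const 1
    have hG : HasDerivAt G (deriv G (g s)) (g s) := (hGdiff (g s)).hasDerivAt
    have := (hG.comp s hg).const_sub 1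
    simpa [hDddef, mul_comm] using this
  -- derivative of H
  have hHfun : H = fun s => N s / D s := by funext s; rw [hH]
  have hHderiv : ∀ s, HasDerivAt H (Hd s) s := by
    intro s
    rw [hHfun]
    exact (hNderiv s).div (hDderiv s) (hDne s)
  have hderivH : deriv H = Hd := funext fun s => (hHderiv s).deriv
  -- values at 0
  have hB0 : B 0 = 1 / 2 := by rw [hB]; norm_num
  have hg0 : g 0 = 0 := by simp [hgdef, hB0]
  have hNd0 : Nd 0 = 0 := by
    simp only [hNddef, zero_add, zero_sub]
    unfold phi
    rw [neg_sq]
    ring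
  have hBd0 : Bd 0 = σ / 2 := by
    simp only [hBddef, hfdef]
    norm_num
    ring
  have hN0 : 0 < N 0 := by
    have hint := intervalIntegral.integral_Iic_sub_Iic (μ := MeasureTheory.volume)
      (f := phi) (a := -σ) (b := σ) phi_integrable.integrableOn phi_integrable.integrableOn
    have hpos : 0 < ∫ t in (-σ)..σ, phi t :=
      intervalIntegral.intervalIntegral_pos_of_pos
        phi_integrable.intervalIntegrable (fun x => phi_pos x) (by linarith)
    simp only [hNdef, zero_add, zero_sub]
    unfold PhiCdf
    linarith
  have hHd0 : 0 < Hd 0 := by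
    have hd0 := hDpos 0
    simp only [hHddef, hNd0, hDddef, hg0, hBd0]
    rw [zero_mul]
    have : -(deriv G 0 * (2 * (σ / 2))) = -(deriv G 0 * σ) := by ring
    rw [this]
    have hnum : 0 - N 0 * -(deriv G 0 * σ) = N 0 * (deriv G 0 * σ) := by ring
    rw [hnum]
    positivity
  have h0 : 0 < deriv H 0 := by rw [hderivH]; exact hHd0
  refine ⟨h0, ?_⟩
  -- continuity of Hd
  have hBcont : Continuous B := by
    rw [hBfun]
    exact (continuous_const.add (by fun_prop)).inv₀ fun s => ne_of_gt (hfpos s)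
  have hgcont : Continuous g := by
    simp only [hgdef]; fun_prop
  have hDcont : Continuous D := continuous_const.sub (hGC.continuous.comp hgcont)
  have hBdcont : Continuous Bd := by
    apply Continuous.div (by fun_prop) (by fun_prop)
    intro s; exact pow_ne_zero 2 (ne_of_gt (hfpos s))
  have hNcont : Continuous N := by
    have : Continuous PhiCdf := (Differentiable.continuous (fun x => (hasDerivAt_PhiCdf x).differentiableAt))
    exact (this.comp (by fun_prop)).sub (this.comp (by fun_prop))
  have hDdcont : Continuous Dd :=
    (((hGC.continuous_deriv le_rfl).comp hgcont).mul (continuous_const.mul hBdcont)).neg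
  have hNdcont : Continuous Nd :=
    (phi_cont.comp (by fun_prop)).sub (phi_cont.comp (by fun_prop))
  have hHdcont : Continuous Hd := by
    apply Continuous.div ((hNdcont.mul hDcont).sub (hNcont.mul hDdcont)) (hDcont.pow 2)
    intro s; exact pow_ne_zero 2 (hDne s)
  -- find neighborhood where deriv H > 0
  have hopen : IsOpen {s : ℝ | 0 < Hd s} := isOpen_lt continuous_const hHdcont
  have hmem : {s : ℝ | 0 < Hd s} ∈ nhds (0 : ℝ) := hopen.mem_nhds hHd0
  obtain ⟨ε, hε, hball⟩ := Metric.mem_nhds_iff.mp hmem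
  refine ⟨ε / 2, by linarith, ?_⟩
  have hsub : Set.Icc (0:ℝ) (ε / 2) ⊆ {s : ℝ | 0 < Hd s} := by
    intro x hx
    apply hball
    simp only [Metric.mem_ball, Real.dist_eq, sub_zero]
    rw [abs_of_nonneg hx.1]
    linarith [hx.2]
  apply strictMonoOn_of_deriv_pos (convex_Icc 0 (ε / 2))
  · exact fun x _ => ((hHderiv x).differentiableAt.continuousAt).continuousWithinAt
  · intro x hx
    rw [hderivH]
    exact hsub (interior_subset hx)
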